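/- Let K be a field of characteristic zero, R = K[x,y,z], and let a ≥ b ≥ 2 and 1 ≤ β ≤ b−1 be integers. Let A_β = R/I_β where I_β = (x^a, y^b − x^{b−1} z, z^2, x^{a−b+1} y^{b−β}, y^{b−β} z), and set k = ⌊(a+b−β−1)/2⌋. Then h_{A_β}(k) = 2b − β if β ≤ a−b, and h_{A_β}(k) = a + b − 2β + 1 if β ≥ a−b+1. Moreover, if 1 ≤ β ≤ a−b−1, then h_{A_β}(k) = h_{A_β}(k−1). -/

import Mathlib

open MvPolynomial

/-- The degree-`i` graded component of `R/I`, i.e. the image in `R/I` of the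
space of homogeneous polynomials of degree `i`. -/
noncomputable def grComponent (K : Type*) [Field K]
    (I : Ideal (MvPolynomial (Fin 3) K)) (i : ℕ) :
    Submodule K (MvPolynomial (Fin 3) K ⧸ I) :=
  (MvPolynomial.homogeneousSubmodule (Fin 3) K i).map
    (Ideal.Quotient.mkₐ K I).toLinearMap

/-- The Hilbert function of `R/I`. -/
noncomputable def hilb (K : Type*) [Field K]
    (I : Ideal (MvPolynomial (Fin 3) K)) (i : ℕ) : ℕ :=
  Module.finrank K (grComponent K I i)

/-- `R/I` has the weak Lefschetz property: there is a linear form `L` such that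
for every `i`, multiplication by `L` from `[R/I]_i` to `[R/I]_{i+1}` is
injective or surjective. -/
def hasWLP (K : Type*) [Field K] (I : Ideal (MvPolynomial (Fin 3) K)) : Prop :=
  ∃ L : MvPolynomial (Fin 3) K, L.IsHomogeneous 1 ∧
    ∀ i : ℕ,
      (∀ u ∈ grComponent K I i, ∀ v ∈ grComponent K I i,
          Ideal.Quotient.mk I L * u = Ideal.Quotient.mk I L * v → u = v) ∨
      (∀ w ∈ grComponent K I (i + 1), ∃ u ∈ grComponent K I i,
          Ideal.Quotient.mk I L * u = w)


namespace Stmt5Aux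
noncomputable section
variable (K : Type*) [Field K]

abbrev V (K : Type*) [Field K] : Type _ := (ℕ × ℕ × ℕ) →₀ K

def red (a b β i j e : ℕ) : V K :=
  if e = 0 then
    (if j < b then
      (if i < a ∧ (j + β < b ∨ i + b ≤ a) then Finsupp.single (i, j, 0) 1 else 0)
     else
      (if j + β < 2 * b ∧ i + b ≤ a then Finsupp.single (i + b - 1, j - b, 1) 1 else 0))
  else if e = 1 then
    (if j + β < b ∧ i < a then Finsupp.single (i, j, 1) 1 else 0)
  else 0

def ex (i j e : ℕ) : Fin 3 →₀ ℕ :=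
  Finsupp.single 0 i + Finsupp.single 1 j + Finsupp.single 2 e

lemma ex_apply0 (i j e : ℕ) : ex i j e 0 = i := by
  simp [ex, Finsupp.single_apply]
lemma ex_apply1 (i j e : ℕ) : ex i j e 1 = j := by
  simp [ex, Finsupp.single_apply]
lemma ex_apply2 (i j e : ℕ) : ex i j e 2 = e := by
  simp [ex, Finsupp.single_apply]

lemma ex_add (i j e i' j' e' : ℕ) :
    ex i j e + ex i' j' e' = ex (i + i') (j + j') (e + e') := by
  simp only [ex, Finsupp.single_add]
  abel

lemma eq_ex (d : Fin 3 →₀ ℕ) : d = ex (d 0) (d 1) (d 2) := by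
  ext t
  fin_cases t <;> simp [ex, Finsupp.single_apply]

lemma X_prod (i j e : ℕ) :
    (X 0 : MvPolynomial (Fin 3) K) ^ i * X 1 ^ j * X 2 ^ e = monomial (ex i j e) 1 := by
  simp [X_pow_eq_monomial, monomial_mul, ex]

def phi (a b β : ℕ) : MvPolynomial (Fin 3) K →ₗ[K] V K :=
  (basisMonomials (Fin 3) K).constr K fun d => red K a b β (d 0) (d 1) (d 2)

lemma phi_monomial (a b β : ℕ) (d : Fin 3 →₀ ℕ) :
    phi K a b β (monomial d 1) = red K a b β (d 0) (d 1) (d 2) := by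
  have h1 : (basisMonomials (Fin 3) K) d = monomial d 1 :=
    congrFun (coe_basisMonomials _ _) d
  rw [← h1]
  exact (basisMonomials (Fin 3) K).constr_basis K _ d

lemma phi_monomial_ex (a b β i j e : ℕ) :
    phi K a b β (monomial (ex i j e) 1) = red K a b β i j e := by
  rw [phi_monomial, ex_apply0, ex_apply1, ex_apply2]

variable {a b β : ℕ}

lemma red_L1 (i j e : ℕ) : red K a b β (i + a) j e = 0 := by
  unfold red
  split_ifs <;> first | rfl | contradiction | (exfalso; omega)

lemma red_L3 (i j e : ℕ) : red K a b β i j (e + 2) = 0 := by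
  unfold red
  split_ifs <;> first | rfl | contradiction | (exfalso; omega)

lemma red_L4 (hba : b ≤ a) (hβ : β ≤ b) (i j e : ℕ) :
    red K a b β (i + (a - b + 1)) (j + (b - β)) e = 0 := by
  unfold red
  split_ifs <;> first | rfl | contradiction | (exfalso; omega)

lemma red_L5 (hβ : β ≤ b) (i j e : ℕ) :
    red K a b β i (j + (b - β)) (e + 1) = 0 := by
  unfold red
  split_ifs <;> first | rfl | contradiction | (exfalso; omega)

lemma red_L2 (hb : 1 ≤ b) (i j e : ℕ) :
    red K a b β i (j + b) e = red K a b β (i + (b - 1)) j (e + 1) := by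
  unfold red
  split_ifs <;>
    first
      | rfl
      | contradiction
      | (exfalso; omega)
      | (rw [show i + b - 1 = i + (b - 1) from by omega, show j + b - b = j from by omega])


def Iab (a b β : ℕ) : Ideal (MvPolynomial (Fin 3) K) :=
  Ideal.span {(X 0 : MvPolynomial (Fin 3) K) ^ a,
      X 1 ^ b - X 0 ^ (b - 1) * X 2, X 2 ^ 2,
      X 0 ^ (a - b + 1) * X 1 ^ (b - β), X 1 ^ (b - β) * X 2}

lemma phi_gen_mul (hb : 2 ≤ b) (hba : b ≤ a) (hβ2 : β < b)
    (g : MvPolynomial (Fin 3) K)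
    (hg : g ∈ ({(X 0 : MvPolynomial (Fin 3) K) ^ a,
      X 1 ^ b - X 0 ^ (b - 1) * X 2, X 2 ^ 2,
      X 0 ^ (a - b + 1) * X 1 ^ (b - β), X 1 ^ (b - β) * X 2} :
        Set (MvPolynomial (Fin 3) K)))
    (d : Fin 3 →₀ ℕ) : phi K a b β (monomial d 1 * g) = 0 := by
  have hd : (monomial d 1 : MvPolynomial (Fin 3) K)
      = monomial (ex (d 0) (d 1) (d 2)) 1 := by rw [← eq_ex]
  simp only [Set.mem_insert_iff, Set.mem_singleton_iff] at hg
  rcases hg with rfl | rfl | rfl | rfl | rfl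
  · rw [show (X 0 : MvPolynomial (Fin 3) K) ^ a = X 0 ^ a * X 1 ^ 0 * X 2 ^ 0 from by ring,
      X_prod, hd, monomial_mul, ex_add, mul_one, phi_monomial_ex]
    exact red_L1 K _ _ _
  · rw [mul_sub, show (X 1 : MvPolynomial (Fin 3) K) ^ b = X 0 ^ 0 * X 1 ^ b * X 2 ^ 0 from by
        ring,
      show (X 0 : MvPolynomial (Fin 3) K) ^ (b - 1) * X 2 = X 0 ^ (b - 1) * X 1 ^ 0 * X 2 ^ 1
        from by ring, X_prod, X_prod, hd, monomial_mul, monomial_mul, ex_add, ex_add, mul_one,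
      map_sub, phi_monomial_ex, phi_monomial_ex]
    rw [show d 0 + 0 = d 0 from by omega, show d 1 + 0 = d 1 from by omega,
      show d 2 + 0 = d 2 from by omega]
    rw [red_L2 K (by omega) (d 0) (d 1) (d 2), sub_eq_zero]
  · rw [show (X 2 : MvPolynomial (Fin 3) K) ^ 2 = X 0 ^ 0 * X 1 ^ 0 * X 2 ^ 2 from by ring,
      X_prod, hd, monomial_mul, ex_add, mul_one, phi_monomial_ex]
    rw [show d 0 + 0 = d 0 from by omega, show d 1 + 0 = d 1 from by omega]
    exact red_L3 K _ _ _
  · rw [show (X 0 : MvPolynomial (Fin 3) K) ^ (a - b + 1) * X 1 ^ (b - β)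
        = X 0 ^ (a - b + 1) * X 1 ^ (b - β) * X 2 ^ 0 from by ring,
      X_prod, hd, monomial_mul, ex_add, mul_one, phi_monomial_ex]
    rw [show d 2 + 0 = d 2 from by omega]
    exact red_L4 K hba (by omega) _ _ _
  · rw [show (X 1 : MvPolynomial (Fin 3) K) ^ (b - β) * X 2
        = X 0 ^ 0 * X 1 ^ (b - β) * X 2 ^ 1 from by ring,
      X_prod, hd, monomial_mul, ex_add, mul_one, phi_monomial_ex]
    rw [show d 0 + 0 = d 0 from by omega]
    exact red_L5 K (by omega) _ _ _

lemma phi_ker (hb : 2 ≤ b) (hba : b ≤ a) (hβ2 : β < b)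
    {p : MvPolynomial (Fin 3) K} (hp : p ∈ Iab K a b β) : phi K a b β p = 0 := by
  have key : ∀ (f g : MvPolynomial (Fin 3) K),
      g ∈ ({(X 0 : MvPolynomial (Fin 3) K) ^ a,
        X 1 ^ b - X 0 ^ (b - 1) * X 2, X 2 ^ 2,
        X 0 ^ (a - b + 1) * X 1 ^ (b - β), X 1 ^ (b - β) * X 2} :
          Set (MvPolynomial (Fin 3) K)) → phi K a b β (f * g) = 0 := by
    intro f g hg
    rw [f.as_sum, Finset.sum_mul, map_sum]
    refine Finset.sum_eq_zero fun d _ => ?_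
    have h1 : (monomial d (coeff d f) : MvPolynomial (Fin 3) K) * g
        = (coeff d f) • (monomial d 1 * g) := by
      rw [← smul_mul_assoc, smul_monomial, smul_eq_mul, mul_one]
    rw [h1, map_smul, phi_gen_mul K hb hba hβ2 g hg d, smul_zero]
  have H : ∀ x ∈ Iab K a b β, ∀ f : MvPolynomial (Fin 3) K, phi K a b β (f * x) = 0 := by
    intro x hx
    induction hx using Submodule.span_induction with
    | mem g hg => exact fun f => key f g hg
    | zero => intro f; rw [mul_zero, map_zero]
    | add x y _ _ hx' hy' => intro f; rw [mul_add, map_add, hx' f, hy' f, add_zero]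
    | smul r x _ hx' => intro f; rw [smul_eq_mul, ← mul_assoc, hx' (f * r)]
  have := H p hp 1
  rwa [one_mul] at this


def Sfin (a b β k : ℕ) : Finset (ℕ × ℕ × ℕ) :=
  ((Finset.Ico (k + 1 - a) (min (b - β) (k + 1))).image fun j => (k - j, j, 0)) ∪
  ((Finset.Ico (max (b - β) (k + b - a)) (min b (k + 1))).image fun j => (k - j, j, 0)) ∪
  ((Finset.Ico (k - a) (min (b - β) k)).image fun j => (k - 1 - j, j, 1))

lemma inj0 (k : ℕ) : Function.Injective (fun j : ℕ => ((k - j, j, 0) : ℕ × ℕ × ℕ)) :=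
  fun u v h => by simpa using congrArg (fun p : ℕ × ℕ × ℕ => p.2.1) h

lemma inj1 (k : ℕ) : Function.Injective (fun j : ℕ => ((k - 1 - j, j, 1) : ℕ × ℕ × ℕ)) :=
  fun u v h => by simpa using congrArg (fun p : ℕ × ℕ × ℕ => p.2.1) h

lemma Sfin_card (a b β k : ℕ) :
    (Sfin a b β k).card =
      (min (b - β) (k + 1) - (k + 1 - a)) + (min b (k + 1) - max (b - β) (k + b - a)) +
        (min (b - β) k - (k - a)) := by
  rw [Sfin]
  rw [Finset.card_union_of_disjoint, Finset.card_union_of_disjoint]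
  · rw [Finset.card_image_of_injective _ (inj0 k), Finset.card_image_of_injective _ (inj0 k),
      Finset.card_image_of_injective _ (inj1 k), Nat.card_Ico, Nat.card_Ico, Nat.card_Ico]
  · rw [Finset.disjoint_left]
    rintro x hx hy
    simp only [Finset.mem_image, Finset.mem_Ico] at hx hy
    obtain ⟨j, hj, rfl⟩ := hx
    obtain ⟨j', hj', h⟩ := hy
    have := congrArg (fun p : ℕ × ℕ × ℕ => p.2.1) h
    simp only at this
    omega
  · rw [Finset.disjoint_left]
    rintro x hx hy
    simp only [Finset.mem_union, Finset.mem_image, Finset.mem_Ico] at hx hy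
    obtain ⟨j', hj', h⟩ := hy
    rcases hx with ⟨j, hj, rfl⟩ | ⟨j, hj, rfl⟩ <;>
      · have := congrArg (fun p : ℕ × ℕ × ℕ => p.2.2) h
        simp only at this
        omega

variable {a b β : ℕ}

lemma mem_Sfin_0a {k i j : ℕ} (hd : i + j = k) (h1 : j + β < b) (h2 : i < a) :
    (i, j, 0) ∈ Sfin a b β k := by
  rw [Sfin]
  refine Finset.mem_union_left _ (Finset.mem_union_left _ ?_)
  rw [Finset.mem_image]
  exact ⟨j, Finset.mem_Ico.mpr ⟨by omega, by omega⟩, by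
    simp only [Prod.mk.injEq]
    exact ⟨by omega, trivial⟩⟩

lemma mem_Sfin_0b {k i j : ℕ} (hd : i + j = k) (h1 : b ≤ j + β) (h2 : j < b)
    (h3 : i + b ≤ a) : (i, j, 0) ∈ Sfin a b β k := by
  rw [Sfin]
  refine Finset.mem_union_left _ (Finset.mem_union_right _ ?_)
  rw [Finset.mem_image]
  exact ⟨j, Finset.mem_Ico.mpr ⟨by omega, by omega⟩, by
    simp only [Prod.mk.injEq]
    exact ⟨by omega, trivial⟩⟩

lemma mem_Sfin_1 {k i j : ℕ} (hd : i + j + 1 = k) (h1 : j + β < b) (h2 : i < a) :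
    (i, j, 1) ∈ Sfin a b β k := by
  rw [Sfin]
  refine Finset.mem_union_right _ ?_
  rw [Finset.mem_image]
  exact ⟨j, Finset.mem_Ico.mpr ⟨by omega, by omega⟩, by
    simp only [Prod.mk.injEq]
    exact ⟨by omega, trivial⟩⟩

lemma Sfin_spec (hb : 2 ≤ b) (hba : b ≤ a) (hβ1 : 1 ≤ β) (hβ2 : β < b) {k : ℕ}
    {s : ℕ × ℕ × ℕ} (hs : s ∈ Sfin a b β k) :
    s.1 + s.2.1 + s.2.2 = k ∧
      red K a b β s.1 s.2.1 s.2.2 = Finsupp.single s 1 := by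
  rw [Sfin] at hs
  simp only [Finset.mem_union, Finset.mem_image, Finset.mem_Ico] at hs
  rcases hs with (⟨j, hj, rfl⟩ | ⟨j, hj, rfl⟩) | ⟨j, hj, rfl⟩ <;>
    dsimp only <;>
    refine ⟨by omega, ?_⟩ <;>
    · unfold red
      split_ifs <;> first | rfl | contradiction | (exfalso; omega)


lemma mono_mul (i j e i' j' e' : ℕ) :
    (monomial (ex i j e) 1 : MvPolynomial (Fin 3) K) * monomial (ex i' j' e') 1
      = monomial (ex (i + i') (j + j') (e + e')) 1 := by
  rw [monomial_mul, ex_add, mul_one]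

lemma gen1_eq : (X 0 : MvPolynomial (Fin 3) K) ^ a = monomial (ex a 0 0) 1 := by
  rw [← X_prod]; ring
lemma gen3_eq : (X 2 : MvPolynomial (Fin 3) K) ^ 2 = monomial (ex 0 0 2) 1 := by
  rw [← X_prod]; ring
lemma gen4_eq : (X 0 : MvPolynomial (Fin 3) K) ^ (a - b + 1) * X 1 ^ (b - β)
    = monomial (ex (a - b + 1) (b - β) 0) 1 := by
  rw [← X_prod]; ring
lemma gen5_eq : (X 1 : MvPolynomial (Fin 3) K) ^ (b - β) * X 2
    = monomial (ex 0 (b - β) 1) 1 := by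
  rw [← X_prod]; ring
lemma gen2_eq : (X 1 : MvPolynomial (Fin 3) K) ^ b - X 0 ^ (b - 1) * X 2
    = monomial (ex 0 b 0) 1 - monomial (ex (b - 1) 0 1) 1 := by
  rw [← X_prod, ← X_prod]; ring_nf

lemma gmem1 : (X 0 : MvPolynomial (Fin 3) K) ^ a ∈ Iab K a b β :=
  Ideal.subset_span (by left; rfl)
lemma gmem2 : (X 1 : MvPolynomial (Fin 3) K) ^ b - X 0 ^ (b - 1) * X 2 ∈ Iab K a b β :=
  Ideal.subset_span (by right; left; rfl)
lemma gmem3 : (X 2 : MvPolynomial (Fin 3) K) ^ 2 ∈ Iab K a b β :=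
  Ideal.subset_span (by right; right; left; rfl)
lemma gmem4 : (X 0 : MvPolynomial (Fin 3) K) ^ (a - b + 1) * X 1 ^ (b - β) ∈ Iab K a b β :=
  Ideal.subset_span (by right; right; right; left; rfl)
lemma gmem5 : (X 1 : MvPolynomial (Fin 3) K) ^ (b - β) * X 2 ∈ Iab K a b β :=
  Ideal.subset_span (by right; right; right; right; rfl)

lemma mk_mul_zero {g : MvPolynomial (Fin 3) K} (hg : g ∈ Iab K a b β)
    (m : MvPolynomial (Fin 3) K) : Ideal.Quotient.mk (Iab K a b β) (m * g) = 0 :=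
  Ideal.Quotient.eq_zero_iff_mem.mpr (Ideal.mul_mem_left _ _ hg)

/-- image of the basis monomials under the quotient map -/
def T (a b β k : ℕ) : Set (MvPolynomial (Fin 3) K ⧸ Iab K a b β) :=
  (fun s : ℕ × ℕ × ℕ =>
    Ideal.Quotient.mk (Iab K a b β) (monomial (ex s.1 s.2.1 s.2.2) 1)) '' ↑(Sfin a b β k)

lemma span_e1 (hβ2 : β < b) {k i j : ℕ} (hdeg : i + j + 1 = k) :
    Ideal.Quotient.mk (Iab K a b β) (monomial (ex i j 1) 1) ∈
      Submodule.span K (T K a b β k) := by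
  by_cases hyz : b ≤ j + β
  · obtain ⟨j', rfl⟩ : ∃ j', j = j' + (b - β) := ⟨j - (b - β), by omega⟩
    have h1 : (monomial (ex i (j' + (b - β)) 1) 1 : MvPolynomial (Fin 3) K)
        = monomial (ex i j' 0) 1 * (X 1 ^ (b - β) * X 2) := by
      rw [gen5_eq, mono_mul]; simp only [Nat.add_zero, Nat.zero_add]
    rw [h1, mk_mul_zero K (gmem5 K)]
    exact Submodule.zero_mem _
  · by_cases hia : a ≤ i
    · obtain ⟨i', rfl⟩ : ∃ i', i = i' + a := ⟨i - a, by omega⟩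
      have h1 : (monomial (ex (i' + a) j 1) 1 : MvPolynomial (Fin 3) K)
          = monomial (ex i' j 1) 1 * X 0 ^ a := by
        rw [gen1_eq, mono_mul]; simp only [Nat.add_zero, Nat.zero_add]
      rw [h1, mk_mul_zero K (gmem1 K)]
      exact Submodule.zero_mem _
    · exact Submodule.subset_span
        ⟨(i, j, 1), Finset.mem_coe.mpr (mem_Sfin_1 hdeg (by omega) (by omega)), rfl⟩

lemma span_case (hb : 2 ≤ b) (hba : b ≤ a) (hβ1 : 1 ≤ β) (hβ2 : β < b) {k i j e : ℕ}
    (hdeg : i + j + e = k) :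
    Ideal.Quotient.mk (Iab K a b β) (monomial (ex i j e) 1) ∈
      Submodule.span K (T K a b β k) := by
  by_cases he2 : 2 ≤ e
  · obtain ⟨e', rfl⟩ : ∃ e', e = e' + 2 := ⟨e - 2, by omega⟩
    have h1 : (monomial (ex i j (e' + 2)) 1 : MvPolynomial (Fin 3) K)
        = monomial (ex i j e') 1 * X 2 ^ 2 := by
      rw [gen3_eq, mono_mul]; simp only [Nat.add_zero, Nat.zero_add]
    rw [h1, mk_mul_zero K (gmem3 K)]
    exact Submodule.zero_mem _
  · obtain rfl | rfl : e = 0 ∨ e = 1 := by omega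
    · -- e = 0
      by_cases hjb : b ≤ j
      · obtain ⟨j', rfl⟩ : ∃ j', j = j' + b := ⟨j - b, by omega⟩
        have h1 : (monomial (ex i (j' + b) 0) 1 : MvPolynomial (Fin 3) K)
              - monomial (ex (i + (b - 1)) j' 1) 1
            = monomial (ex i j' 0) 1 * (X 1 ^ b - X 0 ^ (b - 1) * X 2) := by
          rw [gen2_eq, mul_sub, mono_mul, mono_mul]
          simp only [Nat.add_zero, Nat.zero_add]
        have h2 : Ideal.Quotient.mk (Iab K a b β) (monomial (ex i (j' + b) 0) 1)
            = Ideal.Quotient.mk (Iab K a b β) (monomial (ex (i + (b - 1)) j' 1) 1) := by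
          rw [Ideal.Quotient.mk_eq_mk_iff_sub_mem, h1]
          exact Ideal.mul_mem_left _ _ (gmem2 K)
        rw [h2]
        exact span_e1 K hβ2 (by omega)
      · by_cases hia : a ≤ i
        · obtain ⟨i', rfl⟩ : ∃ i', i = i' + a := ⟨i - a, by omega⟩
          have h1 : (monomial (ex (i' + a) j 0) 1 : MvPolynomial (Fin 3) K)
              = monomial (ex i' j 0) 1 * X 0 ^ a := by
            rw [gen1_eq, mono_mul]; simp only [Nat.add_zero, Nat.zero_add]
          rw [h1, mk_mul_zero K (gmem1 K)]
          exact Submodule.zero_mem _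
        · by_cases h4 : b ≤ j + β ∧ a - b + 1 ≤ i
          · obtain ⟨i', rfl⟩ : ∃ i', i = i' + (a - b + 1) := ⟨i - (a - b + 1), by omega⟩
            obtain ⟨j', rfl⟩ : ∃ j', j = j' + (b - β) := ⟨j - (b - β), by omega⟩
            have h1 : (monomial (ex (i' + (a - b + 1)) (j' + (b - β)) 0) 1 :
                  MvPolynomial (Fin 3) K)
                = monomial (ex i' j' 0) 1 * (X 0 ^ (a - b + 1) * X 1 ^ (b - β)) := by
              rw [gen4_eq, mono_mul]
            rw [h1, mk_mul_zero K (gmem4 K)]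
            exact Submodule.zero_mem _
          · by_cases hj : j + β < b
            · exact Submodule.subset_span
                ⟨(i, j, 0), Finset.mem_coe.mpr (mem_Sfin_0a (by omega) hj (by omega)), rfl⟩
            · exact Submodule.subset_span
                ⟨(i, j, 0), Finset.mem_coe.mpr
                  (mem_Sfin_0b (by omega) (by omega) (by omega) (by omega)), rfl⟩
    · -- e = 1
      exact span_e1 K hβ2 hdeg

lemma degree_ex (i j e : ℕ) : Finsupp.degree (ex i j e) = i + j + e := by
  rw [Finsupp.degree_apply, Finset.sum_subset (Finset.subset_univ _)
    (fun x _ hx => Finsupp.notMem_support_iff.mp hx), Fin.sum_univ_three,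
    ex_apply0, ex_apply1, ex_apply2]

lemma degree3 (d : Fin 3 →₀ ℕ) : Finsupp.degree d = d 0 + d 1 + d 2 := by
  conv_lhs => rw [eq_ex d]
  rw [degree_ex]



theorem hilb_Iab (hb : 2 ≤ b) (hba : b ≤ a) (hβ1 : 1 ≤ β) (hβ2 : β < b) (k : ℕ) :
    hilb K (Iab K a b β) k = (Sfin a b β k).card := by
  classical
  set I := Iab K a b β with hI
  set f : ℕ × ℕ × ℕ → MvPolynomial (Fin 3) K ⧸ I :=
    fun s => Ideal.Quotient.mk I (monomial (ex s.1 s.2.1 s.2.2) 1) with hf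
  have hT : T K a b β k = f '' ↑(Sfin a b β k) := rfl
  have hspan : grComponent K I k = Submodule.span K (T K a b β k) := by
    apply le_antisymm
    · rintro x ⟨p, hp, rfl⟩
      replace hp : p.IsHomogeneous k := hp
      have hexp : ((Ideal.Quotient.mkₐ K I).toLinearMap :
            MvPolynomial (Fin 3) K →ₗ[K] MvPolynomial (Fin 3) K ⧸ I) p
          = ∑ d ∈ p.support,
              coeff d p • Ideal.Quotient.mk I (monomial (ex (d 0) (d 1) (d 2)) 1) := by
        conv_lhs => rw [p.as_sum]
        rw [map_sum]
        refine Finset.sum_congr rfl fun d hd => ?_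
        have h1 : (monomial d (coeff d p) : MvPolynomial (Fin 3) K)
            = coeff d p • monomial (ex (d 0) (d 1) (d 2)) 1 := by
          rw [smul_monomial, smul_eq_mul, mul_one, ← eq_ex d]
        rw [h1, map_smul, AlgHom.toLinearMap_apply, Ideal.Quotient.mkₐ_eq_mk]
      rw [hexp]
      refine Submodule.sum_mem _ fun d hd => Submodule.smul_mem _ _ ?_
      have hdeg : d 0 + d 1 + d 2 = k := by
        have h := hp (mem_support_iff.mp hd)
        rw [← degree3 d, Finsupp.degree_eq_weight_one]
        exact h
      exact span_case K hb hba hβ1 hβ2 hdeg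
    · rw [Submodule.span_le, hT]
      rintro x ⟨s, hs, rfl⟩
      refine ⟨monomial (ex s.1 s.2.1 s.2.2) 1, ?_, ?_⟩
      · exact isHomogeneous_monomial _ (by
          rw [degree_ex]
          exact (Sfin_spec K hb hba hβ1 hβ2 (Finset.mem_coe.mp hs)).1)
      · rw [AlgHom.toLinearMap_apply, Ideal.Quotient.mkₐ_eq_mk]
  have hind : LinearIndependent K (fun s : ↥(Sfin a b β k) => f s.val) := by
    rw [linearIndependent_iff']
    intro t g hsum s₀ hs₀
    set p : MvPolynomial (Fin 3) K :=
      ∑ s ∈ t, g s • monomial (ex s.val.1 s.val.2.1 s.val.2.2) 1 with hp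
    have hmk : (Ideal.Quotient.mkₐ K I) p = 0 := by
      rw [hp, map_sum, ← hsum]
      refine Finset.sum_congr rfl fun s _ => ?_
      rw [map_smul, Ideal.Quotient.mkₐ_eq_mk]
    have hpI : p ∈ Iab K a b β := by
      rw [← Ideal.Quotient.eq_zero_iff_mem, ← Ideal.Quotient.mkₐ_eq_mk K]
      exact hmk
    have hphi : phi K a b β p = 0 := phi_ker K hb hba hβ2 hpI
    have hexp : phi K a b β p = ∑ s ∈ t, g s • Finsupp.single s.val 1 := by
      rw [hp, map_sum]
      refine Finset.sum_congr rfl fun s _ => ?_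
      rw [map_smul, phi_monomial_ex,
        (Sfin_spec K hb hba hβ1 hβ2 s.property).2]
    have hval := DFunLike.congr_fun (hexp ▸ hphi) s₀.val
    rw [Finset.sum_apply'] at hval
    rw [Finset.sum_eq_single_of_mem s₀ hs₀ (fun s _ hne => ?_)] at hval
    · rw [Finsupp.smul_apply, Finsupp.single_apply, if_pos rfl, smul_eq_mul, mul_one] at hval
      simpa using hval
    · rw [Finsupp.smul_apply, Finsupp.single_apply,
        if_neg (fun hcontra => hne (Subtype.ext hcontra)), smul_zero]
  have hrange : Set.range (fun s : ↥(Sfin a b β k) => f s.val) = T K a b β k := by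
    rw [hT]
    exact (Set.image_eq_range f ↑(Sfin a b β k)).symm
  rw [hilb, hspan, ← hrange, finrank_span_eq_card hind, Fintype.card_coe]

end
end Stmt5Aux

set_option maxHeartbeats 2000000 in
theorem stmt_5 (K : Type*) [Field K] [CharZero K] (a b β : ℕ)
    (hb : 2 ≤ b) (hab : b ≤ a) (hβ1 : 1 ≤ β) (hβ2 : β ≤ b - 1) :
    let I : Ideal (MvPolynomial (Fin 3) K) := Ideal.span {(X 0 : MvPolynomial (Fin 3) K) ^ a,
      X 1 ^ b - X 0 ^ (b - 1) * X 2, X 2 ^ 2,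
      X 0 ^ (a - b + 1) * X 1 ^ (b - β), X 1 ^ (b - β) * X 2}
    let k : ℕ := (a + b - β - 1) / 2
    (((β : ℤ) ≤ (a : ℤ) - b → (hilb K I k : ℤ) = 2 * b - β) ∧
     ((a : ℤ) - b + 1 ≤ (β : ℤ) → (hilb K I k : ℤ) = a + b - 2 * β + 1) ∧
     ((β : ℤ) ≤ (a : ℤ) - b - 1 → hilb K I k = hilb K I (k - 1))) := by
  intro I k
  have hI : I = Stmt5Aux.Iab K a b β := rfl
  have hk : k = (a + b - β - 1) / 2 := rfl
  clear_value I k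
  subst hI
  subst hk
  have hβ2' : β < b := by omega
  have hval : ∀ m : ℕ, hilb K (Stmt5Aux.Iab K a b β) m =
      (min (b - β) (m + 1) - (m + 1 - a)) + (min b (m + 1) - max (b - β) (m + b - a)) +
        (min (b - β) m - (m - a)) := by
    intro m
    rw [Stmt5Aux.hilb_Iab K hb hab hβ1 hβ2', Stmt5Aux.Sfin_card]
  refine ⟨fun h => ?_, fun h => ?_, fun h => ?_⟩
  · rw [hval]
    omega
  · rw [hval]
    omega
  · rw [hval, hval]
    omega
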